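/- arXiv:2406.16112 — 3 statements merged into one kernel-verified Lean document; each statement's English description precedes it below -/
import Mathlib

section
/- The negative entropy function φ(x) = ∑_{i=1}^d x_i log(x_i) restricted to the probability simplex Δ^{d-1} (with value +∞ outside) is 1-strongly convex with respect to the ℓ¹-norm, i.e., for x, y in the simplex with x having positive entries, φ(y) - φ(x) - ⟨∇φ(x), y-x⟩ ≥ (1/2)‖x - y‖₁². -/
open Real

/-- Key one-variable inequality: `3(t-1)² ≤ (t log t - t + 1)(2t+4)` for `t ≥ 0`. -/
lemma neg_entropy_key (t : ℝ) (ht : 0 ≤ t) :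
    3 * (t - 1) ^ 2 ≤ (t * Real.log t - t + 1) * (2 * t + 4) := by
  set F : ℝ → ℝ := fun s => (s * Real.log s - s + 1) * (2 * s + 4) - 3 * (s - 1) ^ 2 with hF
  set G : ℝ → ℝ := fun s => (4 * s + 4) * Real.log s - 8 * s + 8 with hG
  have hFd : ∀ s : ℝ, 0 < s → HasDerivAt F (G s) s := by
    intro s hs
    have h1 : HasDerivAt (fun u : ℝ => u * Real.log u) (Real.log s + 1) s :=
      Real.hasDerivAt_mul_log hs.ne'
    have h2 : HasDerivAt (fun u : ℝ => u * Real.log u - u + 1) (Real.log s + 1 - 1) s :=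
      ((h1.sub (hasDerivAt_id s)).add_const 1)
    have h3 : HasDerivAt (fun u : ℝ => 2 * u + 4) 2 s := by
      simpa using ((hasDerivAt_id s).const_mul 2).add_const 4
    have h4 := h2.mul h3
    have h5 : HasDerivAt (fun u : ℝ => 3 * (u - 1) ^ 2) (3 * (2 * (s - 1))) s := by
      have : HasDerivAt (fun u : ℝ => (u - 1) ^ 2) (2 * (s - 1) ^ 1 * 1) s :=
        (((hasDerivAt_id s).sub_const 1).pow 2)
      simpa using this.const_mul 3
    have h6 := h4.sub h5
    refine h6.congr_deriv ?_
    show _ = (4 * s + 4) * Real.log s - 8 * s + 8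
    ring
  have hGd : ∀ s : ℝ, 0 < s → HasDerivAt G (4 * Real.log s + (4 * s + 4) / s - 8) s := by
    intro s hs
    have h1 : HasDerivAt (fun u : ℝ => 4 * u + 4) 4 s := by
      simpa using ((hasDerivAt_id s).const_mul 4).add_const 4
    have h2 := h1.mul (Real.hasDerivAt_log hs.ne')
    have h3 : HasDerivAt (fun u : ℝ => 8 * u) 8 s := by
      simpa using (hasDerivAt_id s).const_mul 8
    have h4 := (h2.sub h3).add_const 8
    exact h4.congr_deriv (by ring)
  have hGd_nonneg : ∀ s : ℝ, 0 < s → 0 ≤ 4 * Real.log s + (4 * s + 4) / s - 8 := by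
    intro s hs
    have hlog : 1 - 1 / s ≤ Real.log s := by
      have := Real.log_le_sub_one_of_pos (x := 1 / s) (by positivity)
      rw [Real.log_div one_ne_zero hs.ne', Real.log_one] at this
      linarith
    have hds : (4 * s + 4) / s = 4 + 4 / s := by field_simp
    rw [hds]
    have h4s : 4 / s = 4 * (1 / s) := by ring
    rw [h4s]
    linarith
  have hGmono : MonotoneOn G (Set.Ioi (0 : ℝ)) := by
    apply monotoneOn_of_deriv_nonneg (convex_Ioi 0)
    · exact fun s hs => ((hGd s hs).continuousAt).continuousWithinAt
    · intro s hs
      rw [interior_Ioi] at hs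
      exact (hGd s hs).differentiableAt.differentiableWithinAt
    · intro s hs
      rw [interior_Ioi] at hs
      rw [(hGd s hs).deriv]
      exact hGd_nonneg s hs
  have hG1 : G 1 = 0 := by simp [hG]
  have hGle : ∀ s : ℝ, 0 < s → s ≤ 1 → G s ≤ 0 := by
    intro s hs hs1
    have := hGmono (Set.mem_Ioi.2 hs) (Set.mem_Ioi.2 one_pos) hs1
    linarith [hG1 ▸ this]
  have hGge : ∀ s : ℝ, 1 ≤ s → 0 ≤ G s := by
    intro s hs1
    have := hGmono (Set.mem_Ioi.2 one_pos) (Set.mem_Ioi.2 (lt_of_lt_of_le one_pos hs1)) hs1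
    linarith [hG1 ▸ this]
  have hF1 : F 1 = 0 := by simp [hF]
  have hFcont : ∀ s ∈ Set.Ioi (0:ℝ), ContinuousWithinAt F (Set.Ioi 0) s :=
    fun s hs => ((hFd s hs).continuousAt).continuousWithinAt
  have hFpos : ∀ s : ℝ, 0 < s → 0 ≤ F s := by
    intro s hs
    rcases le_or_gt s 1 with h1 | h1
    · -- F antitone on [s,1] ⊆ Ioi 0
      have hanti : AntitoneOn F (Set.Icc s 1) := by
        apply antitoneOn_of_deriv_nonpos (convex_Icc s 1)
        · intro u hu
          exact ((hFd u (lt_of_lt_of_le hs hu.1)).continuousAt).continuousWithinAt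
        · intro u hu
          rw [interior_Icc] at hu
          exact (hFd u (lt_of_lt_of_le hs hu.1.le)).differentiableAt.differentiableWithinAt
        · intro u hu
          rw [interior_Icc] at hu
          rw [(hFd u (lt_of_lt_of_le hs hu.1.le)).deriv]
          exact hGle u (lt_of_lt_of_le hs hu.1.le) hu.2.le
      have := hanti (Set.mem_Icc.2 ⟨le_refl s, h1⟩) (Set.mem_Icc.2 ⟨h1, le_refl 1⟩) h1
      linarith [hF1 ▸ this]
    · have hmono : MonotoneOn F (Set.Icc (1:ℝ) s) := by
        apply monotoneOn_of_deriv_nonneg (convex_Icc 1 s)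
        · intro u hu
          exact ((hFd u (lt_of_lt_of_le one_pos hu.1)).continuousAt).continuousWithinAt
        · intro u hu
          rw [interior_Icc] at hu
          exact (hFd u (lt_of_lt_of_le one_pos hu.1.le)).differentiableAt.differentiableWithinAt
        · intro u hu
          rw [interior_Icc] at hu
          rw [(hFd u (lt_of_lt_of_le one_pos hu.1.le)).deriv]
          exact hGge u hu.1.le
      have := hmono (Set.mem_Icc.2 ⟨le_refl 1, h1.le⟩) (Set.mem_Icc.2 ⟨h1.le, le_refl s⟩) h1.le
      linarith [hF1 ▸ this]
  rcases eq_or_lt_of_le ht with h0 | h0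
  · rw [← h0]; norm_num
  · have := hFpos t h0
    simp only [hF] at this
    linarith

/-- Per-term bound: for `a ≥ 0`, `b > 0`,
`3(a-b)²/(2a+4b) ≤ a log a - a log b - a + b`. -/
lemma neg_entropy_term (a b : ℝ) (ha : 0 ≤ a) (hb : 0 < b) :
    3 * (a - b) ^ 2 / (2 * a + 4 * b) ≤ a * Real.log a - a * Real.log b - a + b := by
  have hden : 0 < 2 * a + 4 * b := by linarith
  rw [div_le_iff₀ hden]
  rcases eq_or_lt_of_le ha with h0 | h0
  · rw [← h0]; simp; nlinarith
  · have ht : (0:ℝ) ≤ a / b := by positivity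
    have key := neg_entropy_key (a / b) ht
    have hlog : Real.log (a / b) = Real.log a - Real.log b :=
      Real.log_div h0.ne' hb.ne'
    have hb2 : (0:ℝ) < b ^ 2 := by positivity
    have := mul_le_mul_of_nonneg_left key hb2.le
    have hexp : b ^ 2 * ((a / b * Real.log (a / b) - a / b + 1) * (2 * (a / b) + 4)) =
        (a * Real.log a - a * Real.log b - a + b) * (2 * a + 4 * b) := by
      rw [hlog]
      field_simp
    have hexp2 : b ^ 2 * (3 * (a / b - 1) ^ 2) = 3 * (a - b) ^ 2 := by
      field_simp
    rw [hexp, hexp2] at this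
    exact this

/-- The negative entropy on the probability simplex is 1-strongly convex
w.r.t. the ℓ¹-norm. -/
theorem neg_entropy_strongly_convex_l1 (d : ℕ)
    (x y : Fin d → ℝ)
    (hx0 : ∀ i, 0 < x i) (hx1 : ∑ i, x i = 1)
    (hy0 : ∀ i, 0 ≤ y i) (hy1 : ∑ i, y i = 1) :
    (∑ i, y i * Real.log (y i)) - (∑ i, x i * Real.log (x i)) -
        (∑ i, (1 + Real.log (x i)) * (y i - x i))
      ≥ 1 / 2 * (∑ i, |x i - y i|) ^ 2 := by
  have hLHS : (∑ i, y i * Real.log (y i)) - (∑ i, x i * Real.log (x i)) -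
      (∑ i, (1 + Real.log (x i)) * (y i - x i)) =
      ∑ i, (y i * Real.log (y i) - y i * Real.log (x i) - y i + x i) := by
    rw [← Finset.sum_sub_distrib, ← Finset.sum_sub_distrib]
    have h1 : ∑ i, (y i * Real.log (y i) - x i * Real.log (x i)
        - (1 + Real.log (x i)) * (y i - x i)) =
        ∑ i, ((y i * Real.log (y i) - y i * Real.log (x i) - y i + x i)
          - (y i - x i) + (y i - x i)) := by
      apply Finset.sum_congr rfl
      intro i _
      ring
    rw [h1]
    simp only [Finset.sum_add_distrib, Finset.sum_sub_distrib]
    rw [hx1, hy1]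
    ring
  rw [hLHS, ge_iff_le]
  -- per-term lower bound
  have hterm : ∀ i : Fin d, 3 * (y i - x i) ^ 2 / (2 * y i + 4 * x i) ≤
      y i * Real.log (y i) - y i * Real.log (x i) - y i + x i :=
    fun i => neg_entropy_term (y i) (x i) (hy0 i) (hx0 i)
  have hsum1 : ∑ i, 3 * (y i - x i) ^ 2 / (2 * y i + 4 * x i) ≤
      ∑ i, (y i * Real.log (y i) - y i * Real.log (x i) - y i + x i) :=
    Finset.sum_le_sum fun i _ => hterm i
  -- Cauchy-Schwarz (Sedrakyan)
  have hg : ∀ i ∈ Finset.univ (α := Fin d), (0:ℝ) < 2 * y i + 4 * x i := by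
    intro i _
    have := hx0 i; have := hy0 i; linarith
  have hCS := Finset.sq_sum_div_le_sum_sq_div Finset.univ (fun i => |x i - y i|)
    (g := fun i => 2 * y i + 4 * x i) hg
  have hwsum : ∑ i, (2 * y i + 4 * x i) = 6 := by
    rw [Finset.sum_add_distrib, ← Finset.mul_sum, ← Finset.mul_sum, hx1, hy1]
    norm_num
  rw [hwsum] at hCS
  have hsq : ∀ i : Fin d, |x i - y i| ^ 2 / (2 * y i + 4 * x i) =
      (y i - x i) ^ 2 / (2 * y i + 4 * x i) := by
    intro i
    rw [sq_abs]
    congr 1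
    ring
  simp only [hsq] at hCS
  calc 1 / 2 * (∑ i, |x i - y i|) ^ 2
      = 3 * ((∑ i, |x i - y i|) ^ 2 / 6) := by ring
    _ ≤ 3 * ∑ i, (y i - x i) ^ 2 / (2 * y i + 4 * x i) := by linarith
    _ = ∑ i, 3 * (y i - x i) ^ 2 / (2 * y i + 4 * x i) := by
        rw [Finset.mul_sum]; apply Finset.sum_congr rfl; intro i _; ring
    _ ≤ _ := hsum1
end

section
/- If F: ℝ^d → ℝ satisfies the tangential cone condition with constant η < 1/2 and F(ŷ) = 0, then for any x, the Kaczmarz-type step with relaxation σ > 0 satisfies: -2t⟨∇F(x), x - ŷ⟩ + t²‖∇F(x)‖² ≤ -2σ(1/2 - η)F(x)²/‖∇F(x)‖² where t = σF(x)/‖∇F(x)‖² when σ ≤ 1, assuming ∇F(x) ≠ 0. -/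
open RealInnerProductSpace

/-- Descent estimate for the relaxed Kaczmarz-type step under the tangential
cone condition with `η < 1/2`. -/
theorem kaczmarz_step_descent (d : ℕ)
    (F : EuclideanSpace ℝ (Fin d) → ℝ)
    (g : EuclideanSpace ℝ (Fin d) → EuclideanSpace ℝ (Fin d))
    (hg : ∀ z, HasGradientAt F (g z) z)
    (η : ℝ) (hη0 : 0 < η) (hη : η < 1 / 2)
    (htcc : ∀ u v, |F u + ⟪g u, v - u⟫ - F v| ≤ η * |F u - F v|)
    (yhat : EuclideanSpace ℝ (Fin d)) (hyhat : F yhat = 0)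
    (σ : ℝ) (hσ0 : 0 < σ) (hσ1 : σ ≤ 1)
    (x : EuclideanSpace ℝ (Fin d)) (hgx : g x ≠ 0)
    (t : ℝ) (ht : t = σ * F x / ‖g x‖ ^ 2) :
    -2 * t * ⟪g x, x - yhat⟫ + t ^ 2 * ‖g x‖ ^ 2
      ≤ -2 * σ * (1 / 2 - η) * (F x) ^ 2 / ‖g x‖ ^ 2 := by
  have hgn : ‖g x‖ ≠ 0 := norm_ne_zero_iff.mpr hgx
  have hN : (0:ℝ) < ‖g x‖ ^ 2 := by positivity
  set s : ℝ := ⟪g x, x - yhat⟫ with hs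
  have h := htcc x yhat
  have hflip : yhat - x = -(x - yhat) := by abel
  rw [hyhat, hflip, inner_neg_right, ← hs] at h
  have h' : |F x - s| ≤ η * |F x| := by
    have : F x + -s - 0 = F x - s := by ring
    rwa [this, sub_zero] at h
  obtain ⟨h1, h2⟩ := abs_le.mp h'
  have hkey : (1 - η) * F x ^ 2 ≤ F x * s := by
    rcases le_or_gt 0 (F x) with hF | hF
    · rw [abs_of_nonneg hF] at h2
      have hle : (1 - η) * F x ≤ s := by linarith
      nlinarith [mul_le_mul_of_nonneg_left hle hF]
    · rw [abs_of_neg hF] at h1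
      have hle : s ≤ (1 - η) * F x := by linarith
      nlinarith [mul_le_mul_of_nonpos_left hle hF.le]
  subst ht
  have hA : σ * ((1 - η) * F x ^ 2) ≤ σ * (F x * s) :=
    mul_le_mul_of_nonneg_left hkey hσ0.le
  have hB : σ ^ 2 * F x ^ 2 ≤ σ * F x ^ 2 := by
    nlinarith [mul_nonneg (mul_nonneg hσ0.le (sub_nonneg.mpr hσ1)) (sq_nonneg (F x))]
  have hmain : -2 * σ * (F x * s) + σ ^ 2 * F x ^ 2 ≤ -2 * σ * (1 / 2 - η) * F x ^ 2 := by
    nlinarith [hA, hB]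
  have e1 : -2 * (σ * F x / ‖g x‖ ^ 2) * s + (σ * F x / ‖g x‖ ^ 2) ^ 2 * ‖g x‖ ^ 2
      = (-2 * σ * (F x * s) + σ ^ 2 * F x ^ 2) / ‖g x‖ ^ 2 := by
    field_simp
  rw [e1, div_le_div_iff₀ hN hN]
  nlinarith [mul_le_mul_of_nonneg_right hmain hN.le]
end

section
/- Let F': matrix-valued Jacobian of F: ℝ^d → ℝ^n have full column rank at x. If every component F_i satisfies |⟨∇F_i(x), x - x̂⟩| ≤ (1+η)|F_i(x) - F_i(x̂)| and F(x̂) = 0, then ∑_{i=1}^n |F_i(x)|² ≥ ‖F'(x)(x - x̂)‖₂²/(1+η)², and hence ‖F(x)‖₂² ≥ σ_min(F'(x))²‖x - x̂‖₂²/(1+η)². -/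
open RealInnerProductSpace

/-- Residual lower bound from the tangential cone condition and full column
rank of the Jacobian. -/
theorem residual_lower_bound (d n : ℕ)
    (F : EuclideanSpace ℝ (Fin d) → EuclideanSpace ℝ (Fin n))
    (g : Fin n → EuclideanSpace ℝ (Fin d) → EuclideanSpace ℝ (Fin d))
    (hg : ∀ i x, HasGradientAt (fun z => F z i) (g i x) x)
    (η : ℝ) (hη : 0 < η)
    (x xhat : EuclideanSpace ℝ (Fin d))
    (J : EuclideanSpace ℝ (Fin d) →ₗ[ℝ] EuclideanSpace ℝ (Fin n))
    (hJ : ∀ v i, J v i = ⟪g i x, v⟫)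
    (s : ℝ) (hs : 0 < s) (hfullrank : ∀ v, s * ‖v‖ ≤ ‖J v‖)
    (htcc : ∀ i, |⟪g i x, x - xhat⟫| ≤ (1 + η) * |F x i - F xhat i|)
    (hsol : F xhat = 0) :
    (∑ i, |F x i| ^ 2) ≥ ‖J (x - xhat)‖ ^ 2 / (1 + η) ^ 2 ∧
    ‖F x‖ ^ 2 ≥ s ^ 2 * ‖x - xhat‖ ^ 2 / (1 + η) ^ 2 := by
  have hη1 : (0:ℝ) < 1 + η := by linarith
  have hsum : ‖J (x - xhat)‖ ^ 2 ≤ (1 + η) ^ 2 * ∑ i, |F x i| ^ 2 := by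
    rw [EuclideanSpace.norm_eq, Real.sq_sqrt (by positivity), Finset.mul_sum]
    apply Finset.sum_le_sum
    intro i _
    have h := htcc i
    rw [hsol] at h
    simp only [PiLp.zero_apply, sub_zero] at h
    rw [hJ, ← mul_pow]
    exact pow_le_pow_left₀ (abs_nonneg _) h 2
  constructor
  · rw [ge_iff_le, div_le_iff₀ (by positivity)]
    linarith [hsum]
  · have hFn : ‖F x‖ ^ 2 = ∑ i, |F x i| ^ 2 := by
      rw [EuclideanSpace.norm_eq, Real.sq_sqrt (by positivity)]
      simp [Real.norm_eq_abs]
    have h2 : s ^ 2 * ‖x - xhat‖ ^ 2 ≤ ‖J (x - xhat)‖ ^ 2 := by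
      have h3 := pow_le_pow_left₀ (by positivity) (hfullrank (x - xhat)) 2
      rwa [mul_pow] at h3
    rw [ge_iff_le, div_le_iff₀ (by positivity), hFn]
    nlinarith [hsum]
end
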